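/- Let 0 < |γ| < 1 and let T be the operator on ℓ² with T_{ii}=0, T_{1j}=T_{j1}=γ^{j-1} for j≥2, T_{ij}=γ^{max(i,j)-2} for distinct i,j≥2. Define d_1 = 0 and, for n ≥ 2, d_n as the unique real number such that ⟨c_1(T), c_n(T) + d_n e_n⟩ = 0. Then d_n → 1/(γ-1) as n → ∞; in particular the diagonal operator D = Diag((d_n)) is bounded but not compact. -/

import Mathlib

open scoped InnerProductSpace
open ContinuousLinearMap

noncomputable section

variable {H : Type*} [NormedAddCommGroup H] [InnerProductSpace ℂ H] [CompleteSpace H]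

/-- The absolute value `|A| = (A^*A)^{1/2}` of an operator. -/
def opAbs (A : H →L[ℂ] H) : H →L[ℂ] H := CFC.sqrt (ContinuousLinearMap.adjoint A * A)

/-- The trace of an operator computed in the Hilbert basis `e`. -/
def opTrace (e : HilbertBasis ℕ ℂ H) (A : H →L[ℂ] H) : ℂ := ∑' n, ⟪e n, A (e n)⟫_ℂ

/-- The trace norm `‖A‖₁ = tr |A|` computed in the Hilbert basis `e`. -/
def traceNorm (e : HilbertBasis ℕ ℂ H) (A : H →L[ℂ] H) : ℝ :=
  ∑' n, (⟪e n, opAbs A (e n)⟫_ℂ).re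

/-- `A` is trace class: the diagonal of `|A|` is summable. -/
def IsTraceClass (e : HilbertBasis ℕ ℂ H) (A : H →L[ℂ] H) : Prop :=
  Summable fun n => (⟪e n, opAbs A (e n)⟫_ℂ).re

/-- `D` is diagonal in the basis `e` with real diagonal entries. -/
def RealDiag (e : HilbertBasis ℕ ℂ H) (D : H →L[ℂ] H) : Prop :=
  ∀ n, ∃ d : ℝ, D (e n) = (d : ℂ) • e n

/-- Distance from `C` to the compact real diagonal operators, in operator norm. -/
def diagDistK (e : HilbertBasis ℕ ℂ H) (C : H →L[ℂ] H) : ℝ :=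
  ⨅ D : {D : H →L[ℂ] H // IsCompactOperator ⇑D ∧ RealDiag e D}, ‖C + (D : H →L[ℂ] H)‖

/-- Positive part `X⁺ = (|X| + X)/2`. -/
def opPosPart (X : H →L[ℂ] H) : H →L[ℂ] H := (2⁻¹ : ℂ) • (opAbs X + X)

/-- Negative part `X⁻ = (|X| - X)/2`. -/
def opNegPart (X : H →L[ℂ] H) : H →L[ℂ] H := (2⁻¹ : ℂ) • (opAbs X - X)

/-- The matrix of the operator `T` (0-based indexing: index `n` is the paper's `n+1`):
zero diagonal, `T_{1j} = γ^{j-1}` on the first row/column, `T_{ij} = γ^{max(i,j)-2}`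
for distinct `i,j ≥ 2`. -/
def Tmat (γ : ℝ) (i j : ℕ) : ℝ :=
  if i = j then 0 else if i = 0 then γ ^ j else if j = 0 then γ ^ i
  else γ ^ (max i j - 1)

/-- The diagonal sequence: `d 0 = 0` and for `n ≥ 1`, `d n` makes the `n`-th column
of `T + D` orthogonal to the first column of `T`. -/
def dseq (γ : ℝ) (n : ℕ) : ℝ :=
  if n = 0 then 0 else -(∑' k, Tmat γ k 0 * Tmat γ k n) / Tmat γ 0 n

section auxStmt5

variable {γ : ℝ}

lemma Tmat_zero_right {k : ℕ} (hk : k ≠ 0) : Tmat γ k 0 = γ ^ k := by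
  simp [Tmat, hk]

lemma Tmat_zero_left {n : ℕ} (hn : n ≠ 0) : Tmat γ 0 n = γ ^ n := by
  simp [Tmat, Ne.symm hn]

lemma hasSum_key (hγ : |γ| < 1) (m : ℕ) :
    HasSum (fun k => Tmat γ k 0 * Tmat γ k (m + 1))
      (γ ^ (2 * m + 3) * (1 - γ ^ 2)⁻¹
        + ∑ k ∈ Finset.range (m + 2), Tmat γ k 0 * Tmat γ k (m + 1)) := by
  rw [← hasSum_nat_add_iff (m + 2)]
  have he : (fun k => Tmat γ (k + (m + 2)) 0 * Tmat γ (k + (m + 2)) (m + 1))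
      = fun k => γ ^ (2 * m + 3) * (γ ^ 2) ^ k := by
    funext k
    have h1 : Tmat γ (k + (m + 2)) 0 = γ ^ (k + (m + 2)) :=
      Tmat_zero_right (by omega)
    have h2 : Tmat γ (k + (m + 2)) (m + 1) = γ ^ (k + (m + 2) - 1) := by
      rw [Tmat]
      have hmax : max (k + (m + 2)) (m + 1) = k + (m + 2) := by omega
      have hne : k + (m + 2) ≠ m + 1 := by omega
      have hne0 : k + (m + 2) ≠ 0 := by omega
      simp [hne, hne0, hmax]
    rw [h1, h2, ← pow_add, ← pow_mul, ← pow_add]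
    congr 1
    omega
  rw [he]
  have habs2 : |γ ^ 2| < 1 := by
    rw [abs_pow]
    nlinarith [abs_nonneg γ]
  exact (hasSum_geometric_of_abs_lt_one habs2).mul_left _

lemma finsum_key (hγ1 : γ ≠ 1) (m : ℕ) :
    ∑ k ∈ Finset.range (m + 2), Tmat γ k 0 * Tmat γ k (m + 1)
      = γ ^ m * ((γ ^ (m + 2) - 1) / (γ - 1)) - γ ^ m - γ ^ (2 * m + 1) := by
  have hcong : ∀ k ∈ Finset.range (m + 2), Tmat γ k 0 * Tmat γ k (m + 1)
      = γ ^ m * γ ^ k - ((if k = 0 then γ ^ m else 0)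
          + (if k = m + 1 then γ ^ (2 * m + 1) else 0)) := by
    intro k hk
    rcases eq_or_ne k 0 with rfl | hk0
    · simp [Tmat]
    rcases eq_or_ne k (m + 1) with rfl | hkm
    · have hd : Tmat γ (m + 1) (m + 1) = 0 := by simp [Tmat]
      rw [hd, mul_zero, if_neg hk0, if_pos rfl, ← pow_add,
        show m + (m + 1) = 2 * m + 1 from by omega]
      ring
    · have hkm' : k < m + 1 := by
        have := Finset.mem_range.mp hk; omega
      have h1 : Tmat γ k 0 = γ ^ k := Tmat_zero_right hk0
      have h2 : Tmat γ k (m + 1) = γ ^ m := by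
        rw [Tmat]
        have hmax : max k (m + 1) = m + 1 := by omega
        simp [hkm, hk0, hmax]
      rw [h1, h2, if_neg hk0, if_neg hkm]
      ring
  rw [Finset.sum_congr rfl hcong, Finset.sum_sub_distrib, Finset.sum_add_distrib,
    Finset.sum_ite_eq', Finset.sum_ite_eq', ← Finset.mul_sum, geom_sum_eq hγ1]
  have m0 : (0 : ℕ) ∈ Finset.range (m + 2) := by simp
  have m1 : m + 1 ∈ Finset.range (m + 2) := by simp
  rw [if_pos m0, if_pos m1]
  ring

lemma dseq_formula (hγ0 : γ ≠ 0) (hγ : |γ| < 1) (m : ℕ) :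
    dseq γ (m + 1) = -((γ ^ (m + 2) - 1) / (γ * (γ - 1))) + 1 / γ + γ ^ m
      - γ ^ (m + 2) * (1 - γ ^ 2)⁻¹ := by
  have hγ1 : γ ≠ 1 := fun h => by rw [h] at hγ; norm_num at hγ
  have h2 : (1 : ℝ) - γ ^ 2 ≠ 0 := by nlinarith [abs_nonneg γ, sq_abs γ]
  have hsub : γ - 1 ≠ 0 := sub_ne_zero.mpr hγ1
  have hp : γ ^ (m + 1) ≠ 0 := pow_ne_zero _ hγ0
  rw [dseq, if_neg (Nat.succ_ne_zero m), Tmat_zero_left (Nat.succ_ne_zero m),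
    (hasSum_key hγ m).tsum_eq, finsum_key hγ1 m]
  field_simp
  simp only [Nat.succ_eq_add_one]
  ring

lemma dseq_tendsto (hγ0 : γ ≠ 0) (hγ : |γ| < 1) :
    Filter.Tendsto (dseq γ) Filter.atTop (nhds (1 / (γ - 1))) := by
  have hγ1 : γ ≠ 1 := fun h => by rw [h] at hγ; norm_num at hγ
  have h2 : (1 : ℝ) - γ ^ 2 ≠ 0 := by nlinarith [abs_nonneg γ, sq_abs γ]
  have hsub : γ - 1 ≠ 0 := sub_ne_zero.mpr hγ1
  rw [← Filter.tendsto_add_atTop_iff_nat 1]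
  have heq : (fun m => dseq γ (m + 1))
      = fun m => -((γ ^ (m + 2) - 1) / (γ * (γ - 1))) + 1 / γ + γ ^ m
          - γ ^ (m + 2) * (1 - γ ^ 2)⁻¹ := funext (dseq_formula hγ0 hγ)
  rw [heq]
  have hp : Filter.Tendsto (fun m : ℕ => γ ^ m) Filter.atTop (nhds 0) :=
    tendsto_pow_atTop_nhds_zero_of_abs_lt_one hγ
  have hp2 : Filter.Tendsto (fun m : ℕ => γ ^ (m + 2)) Filter.atTop (nhds 0) := by
    simpa [pow_add] using hp.mul_const (γ ^ 2)
  have hbig := ((((hp2.sub_const 1).div_const (γ * (γ - 1))).neg.add_const (1 / γ)).add hp).sub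
    (hp2.mul_const (1 - γ ^ 2)⁻¹)
  have hval : -(((0 : ℝ) - 1) / (γ * (γ - 1))) + 1 / γ + 0 - 0 * (1 - γ ^ 2)⁻¹
      = 1 / (γ - 1) := by
    field_simp
    ring
  rw [← hval]
  exact hbig

lemma bounded_of_tendsto {f : ℕ → ℝ} {L : ℝ} (h : Filter.Tendsto f Filter.atTop (nhds L)) :
    ∃ M, ∀ n, |f n| ≤ M := by
  obtain ⟨N, hN⟩ := Metric.tendsto_atTop.mp h 1 one_pos
  refine ⟨|L| + 1 + ∑ k ∈ Finset.range N, |f k|, fun n => ?_⟩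
  rcases lt_or_ge n N with hn | hn
  · have h1 : |f n| ≤ ∑ k ∈ Finset.range N, |f k| :=
      Finset.single_le_sum (fun i _ => abs_nonneg (f i)) (Finset.mem_range.mpr hn)
    have h0 : (0 : ℝ) ≤ |L| + 1 := by positivity
    linarith
  · have hd := hN n hn
    rw [Real.dist_eq] at hd
    have hsum : (0 : ℝ) ≤ ∑ k ∈ Finset.range N, |f k| :=
      Finset.sum_nonneg fun i _ => abs_nonneg _
    have habs := abs_sub_abs_le_abs_sub (f n) L
    linarith

end auxStmt5

/-- the `d n` are the unique solutions of the orthogonality equations,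
`d n → 1/(γ-1)`, and the diagonal operator `Diag (d n)` is bounded but not compact
(a diagonal operator is compact iff its diagonal is a null sequence). -/

theorem stmt_5 (γ : ℝ) (h0 : 0 < |γ|) (h1 : |γ| < 1) :
    (∀ n, n ≠ 0 →
      (∑' k, Tmat γ k 0 * (Tmat γ k n + if k = n then dseq γ n else 0)) = 0) ∧
    (∀ n, n ≠ 0 → ∀ d : ℝ,
      (∑' k, Tmat γ k 0 * (Tmat γ k n + if k = n then d else 0)) = 0 → d = dseq γ n) ∧
    Filter.Tendsto (dseq γ) Filter.atTop (nhds (1 / (γ - 1))) ∧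
    (∃ M : ℝ, ∀ n, |dseq γ n| ≤ M) ∧
    ¬ Filter.Tendsto (dseq γ) Filter.atTop (nhds 0) := by
  have hγ0 : γ ≠ 0 := fun h => by rw [h] at h0; norm_num at h0
  have hγ1 : γ ≠ 1 := fun h => by rw [h] at h1; norm_num at h1
  have hsub : γ - 1 ≠ 0 := sub_ne_zero.mpr hγ1
  have key : ∀ n, n ≠ 0 → ∀ d : ℝ,
      (∑' k, Tmat γ k 0 * (Tmat γ k n + if k = n then d else 0))
        = (∑' k, Tmat γ k 0 * Tmat γ k n) + γ ^ n * d := by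
    intro n hn d
    obtain ⟨m, rfl⟩ := Nat.exists_eq_succ_of_ne_zero hn
    have hsummable : Summable (fun k => Tmat γ k 0 * Tmat γ k (m + 1)) :=
      (hasSum_key h1 m).summable
    have hs2 : (fun k => Tmat γ k 0 * (Tmat γ k (m + 1) + if k = m + 1 then d else 0))
        = fun k => Tmat γ k 0 * Tmat γ k (m + 1)
            + (if k = m + 1 then γ ^ (m + 1) * d else 0) := by
      funext k
      rcases eq_or_ne k (m + 1) with rfl | hk
      · simp only [if_pos rfl, eq_self_iff_true, if_true,
          Tmat_zero_right (Nat.succ_ne_zero m), Nat.succ_eq_add_one]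
        ring
      · simp [hk]
    rw [hs2, Summable.tsum_add hsummable ((hasSum_ite_eq (m + 1) (γ ^ (m + 1) * d)).summable),
      tsum_ite_eq]
  refine ⟨?_, ?_, dseq_tendsto hγ0 h1, bounded_of_tendsto (dseq_tendsto hγ0 h1), ?_⟩
  · intro n hn
    rw [key n hn, dseq, if_neg hn, Tmat_zero_left hn]
    have hp : γ ^ n ≠ 0 := pow_ne_zero _ hγ0
    field_simp
    ring
  · intro n hn d hd
    rw [key n hn] at hd
    rw [dseq, if_neg hn, Tmat_zero_left hn]
    have hp : γ ^ n ≠ 0 := pow_ne_zero _ hγ0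
    rw [eq_div_iff hp]
    linear_combination hd
  · intro hcon
    have h00 := tendsto_nhds_unique hcon (dseq_tendsto hγ0 h1)
    exact (one_div_ne_zero hsub) h00.symm
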